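/- Let G be the group presented on generators a, b, c, d with relators a², b², c², d², (ab)⁴, (bc)³, (cd)⁴, (ac)², (ad)², (bd)², and (bcd)³. Then G has order 192, and there exists a surjective homomorphism π : S₄ → S₃ (whose kernel is the Klein four-group) such that G is isomorphic to the semidirect product ((Fin 3 → ZMod 2) ⋊ S₄) where S₄ acts on Fin 3 → ZMod 2 by permuting coordinates through π. -/

import Mathlib

namespace Stmt9

/-- The generators `a`, `b`, `c`, `d` of the free group on four letters. -/
def a : FreeGroup (Fin 4) := FreeGroup.of 0
def b : FreeGroup (Fin 4) := FreeGroup.of 1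
def c : FreeGroup (Fin 4) := FreeGroup.of 2
def d : FreeGroup (Fin 4) := FreeGroup.of 3

/-- Relators for the Coxeter group `[4,3,4]` together with the Petrie relator `(bcd)³`. -/
def rels : Set (FreeGroup (Fin 4)) :=
  {a ^ 2, b ^ 2, c ^ 2, d ^ 2, (a * b) ^ 4, (b * c) ^ 3, (c * d) ^ 4,
    (a * c) ^ 2, (a * d) ^ 2, (b * d) ^ 2, (b * c * d) ^ 3}

/-- The group presented by the above relators. -/
abbrev G := PresentedGroup rels

/-- The images of the generators in `G`. -/
def ga : G := PresentedGroup.of 0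
def gb : G := PresentedGroup.of 1
def gc : G := PresentedGroup.of 2
def gd : G := PresentedGroup.of 3

/-- The automorphism of `Multiplicative (Fin m → ZMod 2)` permuting coordinates by `σ`. -/
def coordAut {m : ℕ} (σ : Equiv.Perm (Fin m)) :
    MulAut (Multiplicative (Fin m → ZMod 2)) where
  toFun f := Multiplicative.ofAdd (Multiplicative.toAdd f ∘ σ.symm)
  invFun f := Multiplicative.ofAdd (Multiplicative.toAdd f ∘ σ)
  left_inv f := by
    show Multiplicative.ofAdd ((Multiplicative.toAdd f ∘ ⇑σ.symm) ∘ ⇑σ) = f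
    have : (Multiplicative.toAdd f ∘ ⇑σ.symm) ∘ ⇑σ = Multiplicative.toAdd f := by
      funext x; simp
    rw [this]; rfl
  right_inv f := by
    show Multiplicative.ofAdd ((Multiplicative.toAdd f ∘ ⇑σ) ∘ ⇑σ.symm) = f
    have : (Multiplicative.toAdd f ∘ ⇑σ) ∘ ⇑σ.symm = Multiplicative.toAdd f := by
      funext x; simp
    rw [this]; rfl
  map_mul' f g := rfl

/-- The action of `H` on `Multiplicative (Fin m → ZMod 2)` permuting coordinates
through a homomorphism `π : H →* Equiv.Perm (Fin m)`. -/
def permAction {m : ℕ} {H : Type*} [Group H] (π : H →* Equiv.Perm (Fin m)) :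
    H →* MulAut (Multiplicative (Fin m → ZMod 2)) where
  toFun h := coordAut (π h)
  map_one' := by
    ext f : 1
    show Multiplicative.ofAdd (Multiplicative.toAdd f ∘ ⇑(Equiv.symm (π 1))) = f
    rw [_root_.map_one π]
    rfl
  map_mul' h₁ h₂ := by
    ext f : 1
    show Multiplicative.ofAdd (Multiplicative.toAdd f ∘ ⇑(Equiv.symm (π (h₁ * h₂)))) = _
    rw [_root_.map_mul π]
    rfl

/-! ### generic helpers -/
section helpers
variable {M : Type*} [Group M] {u v w : M}

lemma rel_mk {α : Type*} {rels : Set (FreeGroup α)} {r : FreeGroup α} (h : r ∈ rels) :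
    PresentedGroup.mk rels r = 1 :=
  (QuotientGroup.eq_one_iff _).2 (Subgroup.subset_normalClosure h)

lemma inv_self (h : u * u = 1) : u⁻¹ = u := inv_eq_of_mul_eq_one_right h

lemma comm_of_sq (hu : u * u = 1) (hv : v * v = 1) (h : (u * v) ^ 2 = 1) :
    u * v = v * u := by
  have h2 : (u * v) * (u * v) = 1 := by rw [← pow_two]; exact h
  have h1 : u * v = (u * v)⁻¹ := eq_inv_of_mul_eq_one_left h2
  rw [h1, mul_inv_rev, inv_self hu, inv_self hv]

lemma braid_of_three (hu : u * u = 1) (hv : v * v = 1) (h : (u * v) ^ 3 = 1) :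
    u * (v * u) = v * (u * v) := by
  have e : u * (v * (u * (v * (u * v)))) = 1 := by
    have := h; rw [pow_succ, pow_two] at this; simpa [mul_assoc] using this
  have e1 : (u * (v * u)) * (v * (u * v)) = 1 := by simpa [mul_assoc] using e
  have e2 : (v * (u * v))⁻¹ = v * (u * v) := by
    rw [mul_inv_rev, mul_inv_rev, inv_self hu, inv_self hv, mul_assoc]
  rw [eq_inv_of_mul_eq_one_left e1, e2]

lemma swap_of_four (hu : u * u = 1) (hv : v * v = 1) (h : (u * v) ^ 4 = 1) :
    u * (v * (u * v)) = v * (u * (v * u)) := by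
  have h2 : (u * v) ^ 2 * (u * v) ^ 2 = 1 := by rw [← pow_add]; exact h
  have h3 : (u * v) ^ 2 = ((u * v) ^ 2)⁻¹ := eq_inv_of_mul_eq_one_left h2
  have h4 : ((u * v) ^ 2)⁻¹ = (v * u) ^ 2 := by
    rw [← inv_pow, mul_inv_rev, inv_self hu, inv_self hv]
  have h5 : (u * v) ^ 2 = (v * u) ^ 2 := h3.trans h4
  rw [pow_two, pow_two] at h5
  simpa [mul_assoc] using h5

lemma petrie_of_three (hu : u * u = 1) (hv : v * v = 1) (hw : w * w = 1)
    (h : (u * v * w) ^ 3 = 1) :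
    u * (v * (w * (u * (v * w)))) = w * (v * u) := by
  have h2 : (u * v * w) ^ 2 * (u * v * w) = 1 := by rw [← pow_succ]; exact h
  have h3 : (u * v * w) ^ 2 = (u * v * w)⁻¹ := eq_inv_of_mul_eq_one_left h2
  have h4 : (u * v * w)⁻¹ = w * (v * u) := by
    rw [mul_inv_rev, mul_inv_rev, inv_self hu, inv_self hv, inv_self hw]
  have h5 := h3.trans h4
  rw [pow_two] at h5
  simpa [mul_assoc] using h5

end helpers

/-! ### relations in G -/
section Grels

lemma mk_of (i : Fin 4) : PresentedGroup.mk rels (FreeGroup.of i) = PresentedGroup.of i := rfl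

lemma relG (r : FreeGroup (Fin 4)) (h : r ∈ rels) : PresentedGroup.mk rels r = 1 := rel_mk h

lemma sqA : ga * ga = 1 := by
  have := relG (a ^ 2) (by simp [rels]); rwa [pow_two, map_mul] at this
lemma sqB : gb * gb = 1 := by
  have := relG (b ^ 2) (by simp [rels]); rwa [pow_two, map_mul] at this
lemma sqC : gc * gc = 1 := by
  have := relG (c ^ 2) (by simp [rels]); rwa [pow_two, map_mul] at this
lemma sqD : gd * gd = 1 := by
  have := relG (d ^ 2) (by simp [rels]); rwa [pow_two, map_mul] at this

lemma relAB : (ga * gb) ^ 4 = 1 := by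
  have := relG ((a * b) ^ 4) (by simp [rels]); rwa [map_pow, map_mul] at this
lemma relBC : (gb * gc) ^ 3 = 1 := by
  have := relG ((b * c) ^ 3) (by simp [rels]); rwa [map_pow, map_mul] at this
lemma relCD : (gc * gd) ^ 4 = 1 := by
  have := relG ((c * d) ^ 4) (by simp [rels]); rwa [map_pow, map_mul] at this
lemma relAC : (ga * gc) ^ 2 = 1 := by
  have := relG ((a * c) ^ 2) (by simp [rels]); rwa [map_pow, map_mul] at this
lemma relAD : (ga * gd) ^ 2 = 1 := by
  have := relG ((a * d) ^ 2) (by simp [rels]); rwa [map_pow, map_mul] at this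
lemma relBD : (gb * gd) ^ 2 = 1 := by
  have := relG ((b * d) ^ 2) (by simp [rels]); rwa [map_pow, map_mul] at this
lemma relBCD : (gb * gc * gd) ^ 3 = 1 := by
  have := relG ((b * c * d) ^ 3) (by simp [rels]); rwa [map_pow, map_mul, map_mul] at this

-- tail forms of squares
lemma cA : ∀ x : G, ga * (ga * x) = x := fun x => by rw [← mul_assoc, sqA, one_mul]
lemma cB : ∀ x : G, gb * (gb * x) = x := fun x => by rw [← mul_assoc, sqB, one_mul]
lemma cC : ∀ x : G, gc * (gc * x) = x := fun x => by rw [← mul_assoc, sqC, one_mul]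
lemma cD : ∀ x : G, gd * (gd * x) = x := fun x => by rw [← mul_assoc, sqD, one_mul]

-- commutations
lemma commAC : ga * gc = gc * ga := comm_of_sq sqA sqC relAC
lemma commAD : ga * gd = gd * ga := comm_of_sq sqA sqD relAD
lemma commBD : gb * gd = gd * gb := comm_of_sq sqB sqD relBD

lemma tl {M : Type*} [Monoid M] {x y : M} (h : x = y) : ∀ z : M, x * z = y * z :=
  fun z => by rw [h]

lemma commCA' : ∀ x : G, gc * (ga * x) = ga * (gc * x) := fun x => by
  rw [← mul_assoc, ← commAC, mul_assoc]
lemma commDA' : ∀ x : G, gd * (ga * x) = ga * (gd * x) := fun x => by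
  rw [← mul_assoc, ← commAD, mul_assoc]
lemma commDB' : ∀ x : G, gd * (gb * x) = gb * (gd * x) := fun x => by
  rw [← mul_assoc, ← commBD, mul_assoc]

-- braid / order-4 relations
lemma braidBC : gb * (gc * gb) = gc * (gb * gc) := braid_of_three sqB sqC relBC
lemma braidBC' : ∀ x : G, gb * (gc * (gb * x)) = gc * (gb * (gc * x)) := fun x => by
  have := tl braidBC x; simpa [mul_assoc] using this
lemma swapAB : ga * (gb * (ga * gb)) = gb * (ga * (gb * ga)) := swap_of_four sqA sqB relAB
lemma swapAB' : ∀ x : G, ga * (gb * (ga * (gb * x))) = gb * (ga * (gb * (ga * x))) := fun x => by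
  have := tl swapAB x; simpa [mul_assoc] using this
lemma swapCD : gc * (gd * (gc * gd)) = gd * (gc * (gd * gc)) := swap_of_four sqC sqD relCD
lemma swapCD' : ∀ x : G, gc * (gd * (gc * (gd * x))) = gd * (gc * (gd * (gc * x))) := fun x => by
  have := tl swapCD x; simpa [mul_assoc] using this
lemma petrieG : gb * (gc * (gd * (gb * (gc * gd)))) = gd * (gc * gb) :=
  petrie_of_three sqB sqC sqD relBCD

-- L1 : BCDCB = DCDC
lemma L1 : gb * (gc * (gd * (gc * gb))) = gd * (gc * (gd * gc)) := by
  have key : gb * (gc * (gd * (gc * (gb * (gc * (gd * (gc * gd))))))) = 1 := by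
    calc gb * (gc * (gd * (gc * (gb * (gc * (gd * (gc * gd)))))))
        = gb * (gc * (gd * (gb * (gc * (gb * (gd * (gc * gd))))))) := by
          rw [braidBC' (gd * (gc * gd))]
      _ = gb * (gc * (gd * (gb * (gc * (gd * (gb * (gc * gd))))))) := by
          rw [commDB' (gc * gd)]
      _ = 1 := by
          have := relBCD
          rw [pow_succ, pow_two] at this
          simpa [mul_assoc] using this
  have h2 : (gb * (gc * (gd * (gc * gb)))) * (gc * (gd * (gc * gd))) = 1 := by
    simpa [mul_assoc] using key
  have h3 : (gc * (gd * (gc * gd)))⁻¹ = gd * (gc * (gd * gc)) := by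
    rw [mul_inv_rev, mul_inv_rev, mul_inv_rev, inv_self sqC, inv_self sqD]
    simp [mul_assoc]
  rw [eq_inv_of_mul_eq_one_left h2, h3]
lemma L1' : ∀ x : G, gb * (gc * (gd * (gc * (gb * x)))) = gd * (gc * (gd * (gc * x))) :=
  fun x => by have := tl L1 x; simpa [mul_assoc] using this

end Grels

/-! ### transversal words in G -/
section Words

def w1 : G := gb * (ga * gb)
def w0 : G := gc * (gb * (ga * (gb * gc)))

lemma sqW1 : w1 * w1 = 1 := by simp [w1, mul_assoc, cA, cB, sqB]
lemma sqW0 : w0 * w0 = 1 := by simp [w0, mul_assoc, cA, cB, cC, sqC]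

lemma commW1A : ga * w1 = w1 * ga := by
  show ga * (gb * (ga * gb)) = gb * (ga * gb) * ga
  rw [swapAB]; simp [mul_assoc]

lemma commW0A : ga * w0 = w0 * ga := by
  show ga * (gc * (gb * (ga * (gb * gc)))) = gc * (gb * (ga * (gb * gc))) * ga
  simp only [mul_assoc]
  calc ga * (gc * (gb * (ga * (gb * gc))))
      = gc * (ga * (gb * (ga * (gb * gc)))) := (commCA' _).symm
    _ = gc * (gb * (ga * (gb * (ga * gc)))) := by rw [swapAB' gc]
    _ = gc * (gb * (ga * (gb * (gc * ga)))) := by rw [commAC]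

lemma commW0B : gb * w0 = w0 * gb := by
  show gb * (gc * (gb * (ga * (gb * gc)))) = gc * (gb * (ga * (gb * gc))) * gb
  rw [braidBC' (ga * (gb * gc)), commCA' (gb * gc)]
  simp only [mul_assoc]
  rw [← braidBC]

lemma commW0D : gd * w0 = w0 * gd := by
  have key : w0 * (gd * w0) = gd := by
    show gc * (gb * (ga * (gb * gc))) * (gd * (gc * (gb * (ga * (gb * gc))))) = gd
    simp only [mul_assoc]
    rw [show gb * (gc * (gd * (gc * (gb * (ga * (gb * gc)))))) =
        gd * (gc * (gd * (gc * (ga * (gb * gc))))) from L1' _]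
    simp only [commCA', commDA', cA]
    rw [show gd * (gc * (gd * (gc * (gb * gc)))) =
        gb * (gc * (gd * (gc * (gb * (gb * gc))))) from (L1' _).symm]
    simp only [cB, cC]
    rw [sqC, mul_one]
  have h2 : w0 * (w0 * (gd * w0)) = w0 * gd := by rw [key]
  rw [← mul_assoc, sqW0, one_mul] at h2
  rw [h2]

lemma commW1D : gd * w1 = w1 * gd := by
  show gd * (gb * (ga * gb)) = gb * (ga * gb) * gd
  rw [commDB' (ga * gb), commDA' gb, ← mul_assoc, ← commBD]
  simp [mul_assoc, commAD]

-- F7 : w0 * w1 = w1 * w0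
lemma commW0W1 : w0 * w1 = w1 * w0 := by
  have hp : (gb * ga) ^ 4 = 1 := by
    have h : (gb * ga) = (ga * gb)⁻¹ := by rw [mul_inv_rev, inv_self sqA, inv_self sqB]
    rw [h, inv_pow, relAB, inv_one]
  have hpp : gb * (ga * (gb * (ga * (gb * (ga * (gb * ga)))))) = 1 := by
    have := hp; rw [pow_succ, pow_succ, pow_succ, pow_one] at this
    simpa [mul_assoc] using this
  have hu : w0 * w1 = gb * (gc * (gb * (ga * (gb * (ga * (gc * gb)))))) := by
    show gc * (gb * (ga * (gb * gc))) * (gb * (ga * gb)) = _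
    simp only [mul_assoc]
    rw [show gb * (gc * (gb * (ga * gb))) = gc * (gb * (gc * (ga * gb))) from braidBC' _]
    rw [show ga * (gc * (gb * (gc * (ga * gb)))) = gc * (ga * (gb * (gc * (ga * gb)))) from
      (commCA' _).symm]
    rw [show gc * (ga * gb) = ga * (gc * gb) from commCA' _]
    rw [← braidBC' (ga * (gb * (ga * (gc * gb))))]
  have huu : (w0 * w1) * (w0 * w1) = 1 := by
    rw [hu]
    simp only [mul_assoc, cB, cC]
    rw [show gb * (ga * (gb * (ga * (gb * (ga * (gb * (ga * (gc * gb)))))))) = gc * gb from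
      by have h := tl hpp (gc * gb); simpa [mul_assoc] using h]
    simp only [cC]
    exact sqB
  have h2 : (w1 * w0) * (w0 * w1) = 1 := by
    rw [mul_assoc, ← mul_assoc w0, sqW0, one_mul, sqW1]
  rw [eq_inv_of_mul_eq_one_left h2]
  exact eq_inv_of_mul_eq_one_left huu

-- swap rules
lemma swBW1 : gb * w1 = ga * gb := by show gb * (gb * (ga * gb)) = _; rw [cB]
lemma swBA : gb * ga = w1 * gb := by show _ = gb * (ga * gb) * gb; simp [mul_assoc, sqB]
lemma swCW1 : gc * w1 = w0 * gc := by
  show gc * (gb * (ga * gb)) = gc * (gb * (ga * (gb * gc))) * gc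
  simp [mul_assoc, sqC]
lemma swCW0 : gc * w0 = w1 * gc := by
  show gc * (gc * (gb * (ga * (gb * gc)))) = gb * (ga * gb) * gc
  rw [cC]; simp [mul_assoc]

end Words

lemma cover_bound {G : Type*} [Group G] (S : Set G) (hS : Subgroup.closure S = ⊤)
    (hinv : ∀ s ∈ S, s⁻¹ ∈ S) (H : Subgroup G) (hfin : Finite H) (T : List G)
    (h1 : (1 : G) ∈ T)
    (hcl : ∀ t ∈ T, ∀ s ∈ S, ∃ t' ∈ T, t'⁻¹ * (s * t) ∈ H) :
    Finite G ∧ Nat.card G ≤ T.length * Nat.card H := by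
  have hU : ∀ g : G, ∃ t ∈ T, t⁻¹ * g ∈ H := by
    intro g
    have hg : g ∈ Subgroup.closure S := hS ▸ Subgroup.mem_top g
    refine Subgroup.closure_induction_left ?_ ?_ ?_ hg
    · exact ⟨1, h1, by simpa using H.one_mem⟩
    · intro x hx y _ ih
      obtain ⟨t, ht, hth⟩ := ih
      obtain ⟨t', ht', h'⟩ := hcl t ht x hx
      exact ⟨t', ht', by
        have : t'⁻¹ * (x * y) = (t'⁻¹ * (x * t)) * (t⁻¹ * y) := by group
        rw [this]; exact H.mul_mem h' hth⟩
    · intro x hx y _ ih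
      obtain ⟨t, ht, hth⟩ := ih
      obtain ⟨t', ht', h'⟩ := hcl t ht x⁻¹ (hinv x hx)
      exact ⟨t', ht', by
        have : t'⁻¹ * (x⁻¹ * y) = (t'⁻¹ * (x⁻¹ * t)) * (t⁻¹ * y) := by group
        rw [this]; exact H.mul_mem h' hth⟩
  let f : Fin T.length × H → G := fun p => T.get p.1 * (p.2 : G)
  have hf : Function.Surjective f := by
    intro g
    obtain ⟨t, ht, hth⟩ := hU g
    obtain ⟨i, hi⟩ := List.get_of_mem ht
    refine ⟨(i, ⟨t⁻¹ * g, hth⟩), ?_⟩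
    show T.get i * (t⁻¹ * g) = g
    rw [hi]; group
  have : Finite G := Finite.of_surjective f hf
  refine ⟨this, ?_⟩
  calc Nat.card G ≤ Nat.card (Fin T.length × H) := Nat.card_le_card_of_surjective f hf
    _ = T.length * Nat.card H := by simp [Nat.card_prod]


/-! ### G3 : presentation of S3 -/

def rels3 : Set (FreeGroup (Fin 2)) :=
  {FreeGroup.of 0 ^ 2, FreeGroup.of 1 ^ 2, (FreeGroup.of 0 * FreeGroup.of 1) ^ 3}

abbrev G3 := PresentedGroup rels3

def x3 : G3 := PresentedGroup.of 0
def y3 : G3 := PresentedGroup.of 1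

lemma sqX3 : x3 * x3 = 1 := by
  have := rel_mk (rels := rels3) (r := FreeGroup.of 0 ^ 2) (by simp [rels3])
  rwa [pow_two, map_mul] at this
lemma sqY3 : y3 * y3 = 1 := by
  have := rel_mk (rels := rels3) (r := FreeGroup.of 1 ^ 2) (by simp [rels3])
  rwa [pow_two, map_mul] at this
lemma relXY3 : (x3 * y3) ^ 3 = 1 := by
  have := rel_mk (rels := rels3) (r := (FreeGroup.of 0 * FreeGroup.of 1) ^ 3) (by simp [rels3])
  rwa [map_pow, map_mul] at this
lemma braid3 : x3 * (y3 * x3) = y3 * (x3 * y3) := braid_of_three sqX3 sqY3 relXY3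
lemma cX3 : ∀ z : G3, x3 * (x3 * z) = z := fun z => by rw [← mul_assoc, sqX3, one_mul]
lemma cY3 : ∀ z : G3, y3 * (y3 * z) = z := fun z => by rw [← mul_assoc, sqY3, one_mul]

lemma sq3 : ∀ i : Fin 2, (PresentedGroup.of i : G3) * PresentedGroup.of i = 1 := by
  intro i; fin_cases i
  · exact sqX3
  · exact sqY3

lemma boundG3 : Finite G3 ∧ Nat.card G3 ≤ 6 := by
  have hord : IsOfFinOrder x3 := isOfFinOrder_iff_pow_eq_one.2 ⟨2, by norm_num,
    by rw [pow_two]; exact sqX3⟩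
  have hfin : Finite (Subgroup.zpowers x3) := (hord.finite_zpowers).to_subtype
  have H := cover_bound (Set.range (PresentedGroup.of : Fin 2 → G3))
    (PresentedGroup.closure_range_of rels3)
    (by rintro s ⟨i, rfl⟩; exact ⟨i, by rw [inv_self (sq3 i)]⟩)
    (Subgroup.zpowers x3) hfin [1, y3, x3 * y3] (by simp)
    ?_
  · obtain ⟨h1, h2⟩ := H
    refine ⟨h1, le_trans h2 ?_⟩
    have : Nat.card (Subgroup.zpowers x3) ≤ 2 := by
      rw [Nat.card_zpowers]
      exact Nat.le_of_dvd (by norm_num) (orderOf_dvd_of_pow_eq_one (by rw [pow_two]; exact sqX3))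
    simpa using Nat.mul_le_mul_left 3 this
  · rintro t ht s ⟨i, rfl⟩
    fin_cases ht <;> fin_cases i
    · refine ⟨1, by simp, ?_⟩
      show (1:G3)⁻¹ * (x3 * 1) ∈ _
      simpa using Subgroup.mem_zpowers x3
    · refine ⟨y3, by simp, ?_⟩
      show y3⁻¹ * (y3 * 1) ∈ _
      simpa using Subgroup.one_mem _
    · refine ⟨x3 * y3, by simp, ?_⟩
      show (x3 * y3)⁻¹ * (x3 * y3) ∈ _
      rw [inv_mul_cancel]; exact Subgroup.one_mem _
    · refine ⟨1, by simp, ?_⟩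
      show (1:G3)⁻¹ * (y3 * y3) ∈ _
      rw [sqY3, inv_one, one_mul]; exact Subgroup.one_mem _
    · refine ⟨y3, by simp, ?_⟩
      show y3⁻¹ * (x3 * (x3 * y3)) ∈ _
      rw [cX3, inv_mul_cancel]; exact Subgroup.one_mem _
    · refine ⟨x3 * y3, by simp, ?_⟩
      show (x3 * y3)⁻¹ * (y3 * (x3 * y3)) ∈ _
      have : y3 * (x3 * y3) = (x3 * y3) * x3 := by
        rw [← braid3]; simp [mul_assoc]
      rw [this, inv_mul_cancel_left]
      exact Subgroup.mem_zpowers x3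

/-! ### G2 : presentation of S4 -/

def rels2 : Set (FreeGroup (Fin 3)) :=
  {FreeGroup.of 0 ^ 2, FreeGroup.of 1 ^ 2, FreeGroup.of 2 ^ 2,
   (FreeGroup.of 0 * FreeGroup.of 1) ^ 3, (FreeGroup.of 1 * FreeGroup.of 2) ^ 4,
   (FreeGroup.of 0 * FreeGroup.of 2) ^ 2,
   (FreeGroup.of 0 * FreeGroup.of 1 * FreeGroup.of 2) ^ 3}

abbrev G2 := PresentedGroup rels2

def x2 : G2 := PresentedGroup.of 0
def y2 : G2 := PresentedGroup.of 1
def z2 : G2 := PresentedGroup.of 2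

lemma sqX2 : x2 * x2 = 1 := by
  have := rel_mk (rels := rels2) (r := FreeGroup.of 0 ^ 2) (by simp [rels2])
  rwa [pow_two, map_mul] at this
lemma sqY2 : y2 * y2 = 1 := by
  have := rel_mk (rels := rels2) (r := FreeGroup.of 1 ^ 2) (by simp [rels2])
  rwa [pow_two, map_mul] at this
lemma sqZ2 : z2 * z2 = 1 := by
  have := rel_mk (rels := rels2) (r := FreeGroup.of 2 ^ 2) (by simp [rels2])
  rwa [pow_two, map_mul] at this
lemma relXY2 : (x2 * y2) ^ 3 = 1 := by
  have := rel_mk (rels := rels2) (r := (FreeGroup.of 0 * FreeGroup.of 1) ^ 3) (by simp [rels2])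
  rwa [map_pow, map_mul] at this
lemma relYZ2 : (y2 * z2) ^ 4 = 1 := by
  have := rel_mk (rels := rels2) (r := (FreeGroup.of 1 * FreeGroup.of 2) ^ 4) (by simp [rels2])
  rwa [map_pow, map_mul] at this
lemma relXZ2 : (x2 * z2) ^ 2 = 1 := by
  have := rel_mk (rels := rels2) (r := (FreeGroup.of 0 * FreeGroup.of 2) ^ 2) (by simp [rels2])
  rwa [map_pow, map_mul] at this
lemma relXYZ2 : (x2 * y2 * z2) ^ 3 = 1 := by
  have := rel_mk (rels := rels2)
    (r := (FreeGroup.of 0 * FreeGroup.of 1 * FreeGroup.of 2) ^ 3) (by simp [rels2])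
  rwa [map_pow, map_mul, map_mul] at this

lemma cX2 : ∀ w : G2, x2 * (x2 * w) = w := fun w => by rw [← mul_assoc, sqX2, one_mul]
lemma cY2 : ∀ w : G2, y2 * (y2 * w) = w := fun w => by rw [← mul_assoc, sqY2, one_mul]
lemma cZ2 : ∀ w : G2, z2 * (z2 * w) = w := fun w => by rw [← mul_assoc, sqZ2, one_mul]
lemma commXZ2 : x2 * z2 = z2 * x2 := comm_of_sq sqX2 sqZ2 relXZ2
lemma braidXY2 : x2 * (y2 * x2) = y2 * (x2 * y2) := braid_of_three sqX2 sqY2 relXY2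
lemma braidXY2' : ∀ w : G2, x2 * (y2 * (x2 * w)) = y2 * (x2 * (y2 * w)) := fun w => by
  have := tl braidXY2 w; simpa [mul_assoc] using this
lemma swapYZ2 : y2 * (z2 * (y2 * z2)) = z2 * (y2 * (z2 * y2)) := swap_of_four sqY2 sqZ2 relYZ2
lemma swapYZ2' : ∀ w : G2, y2 * (z2 * (y2 * (z2 * w))) = z2 * (y2 * (z2 * (y2 * w))) :=
  fun w => by have := tl swapYZ2 w; simpa [mul_assoc] using this
lemma commZX2' : ∀ w : G2, z2 * (x2 * w) = x2 * (z2 * w) := fun w => by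
  rw [← mul_assoc, ← commXZ2, mul_assoc]

-- L1 in G2 : x y z y x = z y z y
lemma L1G2 : x2 * (y2 * (z2 * (y2 * x2))) = z2 * (y2 * (z2 * y2)) := by
  have key : x2 * (y2 * (z2 * (y2 * (x2 * (y2 * (z2 * (y2 * z2))))))) = 1 := by
    calc x2 * (y2 * (z2 * (y2 * (x2 * (y2 * (z2 * (y2 * z2)))))))
        = x2 * (y2 * (z2 * (x2 * (y2 * (x2 * (z2 * (y2 * z2))))))) := by
          rw [braidXY2' (z2 * (y2 * z2))]
      _ = x2 * (y2 * (z2 * (x2 * (y2 * (z2 * (x2 * (y2 * z2))))))) := by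
          rw [commZX2' (y2 * z2)]
      _ = 1 := by
          have := relXYZ2
          rw [pow_succ, pow_two] at this
          simpa [mul_assoc] using this
  have h2 : (x2 * (y2 * (z2 * (y2 * x2)))) * (y2 * (z2 * (y2 * z2))) = 1 := by
    simpa [mul_assoc] using key
  have h3 : (y2 * (z2 * (y2 * z2)))⁻¹ = z2 * (y2 * (z2 * y2)) := by
    rw [mul_inv_rev, mul_inv_rev, mul_inv_rev, inv_self sqY2, inv_self sqZ2]
    simp [mul_assoc]
  rw [eq_inv_of_mul_eq_one_left h2, h3]

lemma sq2 : ∀ i : Fin 3, (PresentedGroup.of i : G2) * PresentedGroup.of i = 1 := by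
  intro i; fin_cases i
  · exact sqX2
  · exact sqY2
  · exact sqZ2

/-- the homomorphism G3 →* G2 sending generators to x2, y2 -/
def θ3 : G3 →* G2 := PresentedGroup.toGroup (f := ![x2, y2]) (by
  intro r hr
  simp only [rels3, Set.mem_insert_iff, Set.mem_singleton_iff] at hr
  rcases hr with h|h|h <;> subst h <;>
    simp only [map_pow, map_mul, FreeGroup.lift_apply_of, Matrix.cons_val_zero, Matrix.cons_val_one,
      Matrix.head_cons]
  · rw [pow_two]; exact sqX2
  · rw [pow_two]; exact sqY2
  · exact relXY2)

lemma hX2 : x2 ∈ θ3.range := ⟨PresentedGroup.of 0, by simp [θ3]⟩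
lemma hY2 : y2 ∈ θ3.range := ⟨PresentedGroup.of 1, by simp [θ3]⟩

lemma boundG2 : Finite G2 ∧ Nat.card G2 ≤ 24 := by
  have hfinG3 : Finite G3 := boundG3.1
  have hfinH : Finite θ3.range := Finite.of_surjective _ θ3.rangeRestrict_surjective
  have hcardH : Nat.card θ3.range ≤ 6 :=
    le_trans (Nat.card_le_card_of_surjective _ θ3.rangeRestrict_surjective) boundG3.2
  have H := cover_bound (Set.range (PresentedGroup.of : Fin 3 → G2))
    (PresentedGroup.closure_range_of rels2)
    (by rintro s ⟨i, rfl⟩; exact ⟨i, by rw [inv_self (sq2 i)]⟩)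
    θ3.range hfinH [1, z2, y2 * (z2 * y2), z2 * (y2 * (z2 * y2))] (by simp)
    ?_
  · obtain ⟨h1, h2⟩ := H
    refine ⟨h1, le_trans h2 ?_⟩
    calc 4 * Nat.card θ3.range ≤ 4 * 6 := Nat.mul_le_mul_left 4 hcardH
      _ = 24 := by norm_num
  · rintro t ht s ⟨i, rfl⟩
    fin_cases ht <;> fin_cases i
    -- t = 1
    · refine ⟨1, by simp, ?_⟩
      show (1:G2)⁻¹ * (x2 * 1) ∈ _
      simpa using hX2
    · refine ⟨1, by simp, ?_⟩
      show (1:G2)⁻¹ * (y2 * 1) ∈ _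
      simpa using hY2
    · refine ⟨z2, by simp, ?_⟩
      show z2⁻¹ * (z2 * 1) ∈ _
      simpa using Subgroup.one_mem θ3.range
    -- t = z2
    · refine ⟨z2, by simp, ?_⟩
      show z2⁻¹ * (x2 * z2) ∈ _
      rw [commXZ2, inv_mul_cancel_left]; exact hX2
    · refine ⟨y2 * (z2 * y2), by simp, ?_⟩
      show (y2 * (z2 * y2))⁻¹ * (y2 * z2) ∈ _
      have : y2 * z2 = (y2 * (z2 * y2)) * y2 := by simp [mul_assoc, sqY2]
      rw [this, inv_mul_cancel_left]; exact hY2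
    · refine ⟨1, by simp, ?_⟩
      show (1:G2)⁻¹ * (z2 * z2) ∈ _
      rw [sqZ2, inv_one, one_mul]; exact Subgroup.one_mem _
    -- t = y2 * (z2 * y2)
    · refine ⟨z2 * (y2 * (z2 * y2)), by simp, ?_⟩
      show (z2 * (y2 * (z2 * y2)))⁻¹ * (x2 * (y2 * (z2 * y2))) ∈ _
      have : x2 * (y2 * (z2 * y2)) = (z2 * (y2 * (z2 * y2))) * x2 := by
        have h := tl L1G2 x2
        simpa [mul_assoc, sqX2] using h
      rw [this, inv_mul_cancel_left]; exact hX2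
    · refine ⟨z2, by simp, ?_⟩
      show z2⁻¹ * (y2 * (y2 * (z2 * y2))) ∈ _
      rw [cY2, inv_mul_cancel_left]; exact hY2
    · refine ⟨z2 * (y2 * (z2 * y2)), by simp, ?_⟩
      show (z2 * (y2 * (z2 * y2)))⁻¹ * (z2 * (y2 * (z2 * y2))) ∈ _
      rw [inv_mul_cancel]; exact Subgroup.one_mem _
    -- t = z2 * (y2 * (z2 * y2))
    · refine ⟨y2 * (z2 * y2), by simp, ?_⟩
      show (y2 * (z2 * y2))⁻¹ * (x2 * (z2 * (y2 * (z2 * y2)))) ∈ _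
      have hL : x2 * (y2 * (z2 * y2)) = z2 * (y2 * (z2 * (y2 * x2))) := by
        have h := tl L1G2 x2
        simpa [mul_assoc, sqX2] using h
      have : x2 * (z2 * (y2 * (z2 * y2))) = (y2 * (z2 * y2)) * x2 := by
        calc x2 * (z2 * (y2 * (z2 * y2))) = z2 * (x2 * (y2 * (z2 * y2))) :=
              (commZX2' _).symm
          _ = z2 * (z2 * (y2 * (z2 * (y2 * x2)))) := by rw [hL]
          _ = y2 * (z2 * (y2 * x2)) := cZ2 _
          _ = (y2 * (z2 * y2)) * x2 := by simp [mul_assoc]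
      rw [this, inv_mul_cancel_left]; exact hX2
    · refine ⟨z2 * (y2 * (z2 * y2)), by simp, ?_⟩
      show (z2 * (y2 * (z2 * y2)))⁻¹ * (y2 * (z2 * (y2 * (z2 * y2)))) ∈ _
      have : y2 * (z2 * (y2 * (z2 * y2))) = (z2 * (y2 * (z2 * y2))) * y2 := by
        have := swapYZ2' y2
        simpa [mul_assoc] using this
      rw [this, inv_mul_cancel_left]; exact hY2
    · refine ⟨y2 * (z2 * y2), by simp, ?_⟩
      show (y2 * (z2 * y2))⁻¹ * (z2 * (z2 * (y2 * (z2 * y2)))) ∈ _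
      rw [cZ2, inv_mul_cancel]; exact Subgroup.one_mem _

/-- the homomorphism G2 →* G sending generators to gb, gc, gd -/
def θ2 : G2 →* G := PresentedGroup.toGroup (f := ![gb, gc, gd]) (by
  intro r hr
  simp only [rels2, Set.mem_insert_iff, Set.mem_singleton_iff] at hr
  rcases hr with h|h|h|h|h|h|h <;> subst h <;>
    simp only [map_pow, map_mul, FreeGroup.lift_apply_of, Matrix.cons_val_zero, Matrix.cons_val_one,
      Matrix.head_cons, Matrix.cons_val_two, Matrix.tail_cons]
  · rw [pow_two]; exact sqB
  · rw [pow_two]; exact sqC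
  · rw [pow_two]; exact sqD
  · exact relBC
  · exact relCD
  · exact relBD
  · exact relBCD)

lemma hBH : gb ∈ θ2.range := ⟨PresentedGroup.of 0, by simp [θ2]⟩
lemma hCH : gc ∈ θ2.range := ⟨PresentedGroup.of 1, by simp [θ2]⟩
lemma hDH : gd ∈ θ2.range := ⟨PresentedGroup.of 2, by simp [θ2]⟩

lemma sqG : ∀ i : Fin 4, (PresentedGroup.of i : G) * PresentedGroup.of i = 1 := by
  intro i; fin_cases i
  · exact sqA
  · exact sqB
  · exact sqC
  · exact sqD

lemma boundG : Finite G ∧ Nat.card G ≤ 192 := by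
  have hfinG2 : Finite G2 := boundG2.1
  have hfinH : Finite θ2.range := Finite.of_surjective _ θ2.rangeRestrict_surjective
  have hcardH : Nat.card θ2.range ≤ 24 :=
    le_trans (Nat.card_le_card_of_surjective _ θ2.rangeRestrict_surjective) boundG2.2
  have H := cover_bound (Set.range (PresentedGroup.of : Fin 4 → G))
    (PresentedGroup.closure_range_of rels)
    (by rintro s ⟨i, rfl⟩; exact ⟨i, by rw [inv_self (sqG i)]⟩)
    θ2.range hfinH
    [1, w0, w1, w0 * w1, ga, w0 * ga, w1 * ga, w0 * (w1 * ga)] (by simp)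
    ?_
  · obtain ⟨h1, h2⟩ := H
    refine ⟨h1, le_trans h2 ?_⟩
    calc 8 * Nat.card θ2.range ≤ 8 * 24 := Nat.mul_le_mul_left 8 hcardH
      _ = 192 := by norm_num
  · rintro t ht s ⟨i, rfl⟩
    fin_cases ht <;> fin_cases i
    -- t = 1
    · refine ⟨ga, by simp, ?_⟩
      show ga⁻¹ * (ga * 1) ∈ _
      rw [mul_one, inv_mul_cancel]; exact Subgroup.one_mem _
    · refine ⟨1, by simp, ?_⟩
      show (1:G)⁻¹ * (gb * 1) ∈ _
      simpa using hBH
    · refine ⟨1, by simp, ?_⟩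
      show (1:G)⁻¹ * (gc * 1) ∈ _
      simpa using hCH
    · refine ⟨1, by simp, ?_⟩
      show (1:G)⁻¹ * (gd * 1) ∈ _
      simpa using hDH
    -- t = w0
    · refine ⟨w0 * ga, by simp, ?_⟩
      show (w0 * ga)⁻¹ * (ga * w0) ∈ _
      rw [commW0A, inv_mul_cancel]; exact Subgroup.one_mem _
    · refine ⟨w0, by simp, ?_⟩
      show w0⁻¹ * (gb * w0) ∈ _
      rw [commW0B, inv_mul_cancel_left]; exact hBH
    · refine ⟨w1, by simp, ?_⟩
      show w1⁻¹ * (gc * w0) ∈ _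
      rw [swCW0, inv_mul_cancel_left]; exact hCH
    · refine ⟨w0, by simp, ?_⟩
      show w0⁻¹ * (gd * w0) ∈ _
      rw [commW0D, inv_mul_cancel_left]; exact hDH
    -- t = w1
    · refine ⟨w1 * ga, by simp, ?_⟩
      show (w1 * ga)⁻¹ * (ga * w1) ∈ _
      rw [commW1A, inv_mul_cancel]; exact Subgroup.one_mem _
    · refine ⟨ga, by simp, ?_⟩
      show ga⁻¹ * (gb * w1) ∈ _
      rw [swBW1, inv_mul_cancel_left]; exact hBH
    · refine ⟨w0, by simp, ?_⟩
      show w0⁻¹ * (gc * w1) ∈ _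
      rw [swCW1, inv_mul_cancel_left]; exact hCH
    · refine ⟨w1, by simp, ?_⟩
      show w1⁻¹ * (gd * w1) ∈ _
      rw [commW1D, inv_mul_cancel_left]; exact hDH
    -- t = w0 * w1
    · refine ⟨w0 * (w1 * ga), by simp, ?_⟩
      show (w0 * (w1 * ga))⁻¹ * (ga * (w0 * w1)) ∈ _
      have : ga * (w0 * w1) = w0 * (w1 * ga) := by
        rw [← mul_assoc, commW0A, mul_assoc, commW1A, ← mul_assoc]
      rw [this, inv_mul_cancel]; exact Subgroup.one_mem _
    · refine ⟨w0 * ga, by simp, ?_⟩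
      show (w0 * ga)⁻¹ * (gb * (w0 * w1)) ∈ _
      have : gb * (w0 * w1) = (w0 * ga) * gb := by
        rw [← mul_assoc, commW0B, mul_assoc, swBW1, ← mul_assoc]
      rw [this, inv_mul_cancel_left]; exact hBH
    · refine ⟨w0 * w1, by simp, ?_⟩
      show (w0 * w1)⁻¹ * (gc * (w0 * w1)) ∈ _
      have : gc * (w0 * w1) = (w0 * w1) * gc := by
        rw [← mul_assoc, swCW0, mul_assoc, swCW1, ← mul_assoc, ← commW0W1]
      rw [this, inv_mul_cancel_left]; exact hCH
    · refine ⟨w0 * w1, by simp, ?_⟩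
      show (w0 * w1)⁻¹ * (gd * (w0 * w1)) ∈ _
      have : gd * (w0 * w1) = (w0 * w1) * gd := by
        rw [← mul_assoc, commW0D, mul_assoc, commW1D, ← mul_assoc]
      rw [this, inv_mul_cancel_left]; exact hDH
    -- t = ga
    · refine ⟨1, by simp, ?_⟩
      show (1:G)⁻¹ * (ga * ga) ∈ _
      rw [sqA, inv_one, one_mul]; exact Subgroup.one_mem _
    · refine ⟨w1, by simp, ?_⟩
      show w1⁻¹ * (gb * ga) ∈ _
      rw [swBA, inv_mul_cancel_left]; exact hBH
    · refine ⟨ga, by simp, ?_⟩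
      show ga⁻¹ * (gc * ga) ∈ _
      rw [← commAC, inv_mul_cancel_left]; exact hCH
    · refine ⟨ga, by simp, ?_⟩
      show ga⁻¹ * (gd * ga) ∈ _
      rw [← commAD, inv_mul_cancel_left]; exact hDH
    -- t = w0 * ga
    · refine ⟨w0, by simp, ?_⟩
      show w0⁻¹ * (ga * (w0 * ga)) ∈ _
      have : ga * (w0 * ga) = w0 * 1 := by
        rw [← mul_assoc, commW0A, mul_assoc, sqA]
      rw [this, mul_one, inv_mul_cancel]; exact Subgroup.one_mem _
    · refine ⟨w0 * w1, by simp, ?_⟩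
      show (w0 * w1)⁻¹ * (gb * (w0 * ga)) ∈ _
      have : gb * (w0 * ga) = (w0 * w1) * gb := by
        rw [← mul_assoc, commW0B, mul_assoc, swBA, ← mul_assoc]
      rw [this, inv_mul_cancel_left]; exact hBH
    · refine ⟨w1 * ga, by simp, ?_⟩
      show (w1 * ga)⁻¹ * (gc * (w0 * ga)) ∈ _
      have : gc * (w0 * ga) = (w1 * ga) * gc := by
        rw [← mul_assoc, swCW0, mul_assoc, ← commAC, ← mul_assoc]
      rw [this, inv_mul_cancel_left]; exact hCH
    · refine ⟨w0 * ga, by simp, ?_⟩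
      show (w0 * ga)⁻¹ * (gd * (w0 * ga)) ∈ _
      have : gd * (w0 * ga) = (w0 * ga) * gd := by
        rw [← mul_assoc, commW0D, mul_assoc, ← commAD, ← mul_assoc]
      rw [this, inv_mul_cancel_left]; exact hDH
    -- t = w1 * ga
    · refine ⟨w1, by simp, ?_⟩
      show w1⁻¹ * (ga * (w1 * ga)) ∈ _
      have : ga * (w1 * ga) = w1 * 1 := by
        rw [← mul_assoc, commW1A, mul_assoc, sqA]
      rw [this, mul_one, inv_mul_cancel]; exact Subgroup.one_mem _
    · refine ⟨w1 * ga, by simp, ?_⟩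
      show (w1 * ga)⁻¹ * (gb * (w1 * ga)) ∈ _
      have : gb * (w1 * ga) = (w1 * ga) * gb := by
        rw [← mul_assoc, swBW1, mul_assoc, swBA, ← mul_assoc, commW1A]
      rw [this, inv_mul_cancel_left]; exact hBH
    · refine ⟨w0 * ga, by simp, ?_⟩
      show (w0 * ga)⁻¹ * (gc * (w1 * ga)) ∈ _
      have : gc * (w1 * ga) = (w0 * ga) * gc := by
        rw [← mul_assoc, swCW1, mul_assoc, ← commAC, ← mul_assoc]
      rw [this, inv_mul_cancel_left]; exact hCH
    · refine ⟨w1 * ga, by simp, ?_⟩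
      show (w1 * ga)⁻¹ * (gd * (w1 * ga)) ∈ _
      have : gd * (w1 * ga) = (w1 * ga) * gd := by
        rw [← mul_assoc, commW1D, mul_assoc, ← commAD, ← mul_assoc]
      rw [this, inv_mul_cancel_left]; exact hDH
    -- t = w0 * (w1 * ga)
    · refine ⟨w0 * w1, by simp, ?_⟩
      show (w0 * w1)⁻¹ * (ga * (w0 * (w1 * ga))) ∈ _
      have : ga * (w0 * (w1 * ga)) = w0 * w1 := by
        rw [← mul_assoc, commW0A, mul_assoc, ← mul_assoc ga w1 ga, commW1A,
          mul_assoc w1 ga ga, sqA, mul_one]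
      rw [this, inv_mul_cancel]; exact Subgroup.one_mem _
    · refine ⟨w0 * (w1 * ga), by simp, ?_⟩
      show (w0 * (w1 * ga))⁻¹ * (gb * (w0 * (w1 * ga))) ∈ _
      have h1 : gb * (w1 * ga) = (w1 * ga) * gb := by
        rw [← mul_assoc, swBW1, mul_assoc, swBA, ← mul_assoc, commW1A]
      have : gb * (w0 * (w1 * ga)) = (w0 * (w1 * ga)) * gb := by
        rw [← mul_assoc, commW0B, mul_assoc, h1, ← mul_assoc]
      rw [this, inv_mul_cancel_left]; exact hBH
    · refine ⟨w0 * (w1 * ga), by simp, ?_⟩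
      show (w0 * (w1 * ga))⁻¹ * (gc * (w0 * (w1 * ga))) ∈ _
      have h1 : gc * (w1 * ga) = (w0 * ga) * gc := by
        rw [← mul_assoc, swCW1, mul_assoc, ← commAC, ← mul_assoc]
      have : gc * (w0 * (w1 * ga)) = (w0 * (w1 * ga)) * gc := by
        rw [← mul_assoc, swCW0, mul_assoc, h1, ← mul_assoc, ← mul_assoc w1 w0 ga,
          ← commW0W1, mul_assoc w0 w1 ga]
      rw [this, inv_mul_cancel_left]; exact hCH
    · refine ⟨w0 * (w1 * ga), by simp, ?_⟩
      show (w0 * (w1 * ga))⁻¹ * (gd * (w0 * (w1 * ga))) ∈ _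
      have h1 : gd * (w1 * ga) = (w1 * ga) * gd := by
        rw [← mul_assoc, commW1D, mul_assoc, ← commAD, ← mul_assoc]
      have : gd * (w0 * (w1 * ga)) = (w0 * (w1 * ga)) * gd := by
        rw [← mul_assoc, commW0D, mul_assoc, h1, ← mul_assoc]
      rw [this, inv_mul_cancel_left]; exact hDH


open Equiv

def code (x y : Fin 4) : Fin 3 := ⟨min ((x.val ^^^ y.val) - 1) 2, by omega⟩
def pmap (σ : Perm (Fin 4)) (i : Fin 3) : Fin 3 := code (σ 0) (σ i.succ)
lemma pmap_li : ∀ σ : Perm (Fin 4), ∀ i, pmap σ⁻¹ (pmap σ i) = i := by decide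
lemma pmap_mul : ∀ σ τ : Perm (Fin 4), ∀ i, pmap (σ * τ) i = pmap σ (pmap τ i) := by decide
def pi43 : Perm (Fin 4) →* Perm (Fin 3) where
  toFun σ := ⟨pmap σ, pmap σ⁻¹, pmap_li σ, by have := pmap_li σ⁻¹; simp only [inv_inv] at this; exact this⟩
  map_one' := Equiv.ext (by decide)
  map_mul' σ τ := Equiv.ext (pmap_mul σ τ)


lemma pi43_surj : Function.Surjective pi43 := by decide

-- Klein four group elements
def k1 : Perm (Fin 4) := Equiv.swap 0 1 * Equiv.swap 2 3
def k2 : Perm (Fin 4) := Equiv.swap 0 2 * Equiv.swap 1 3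

def kfun (p : Multiplicative (ZMod 2 × ZMod 2)) : Perm (Fin 4) :=
  k1 ^ (p.toAdd.1).val * k2 ^ (p.toAdd.2).val

lemma kfun_mul : ∀ p q, kfun (p * q) = kfun p * kfun q := by decide
lemma kfun_mem : ∀ p, kfun p ∈ pi43.ker := by
  intro p
  have : ∀ p, pi43 (kfun p) = 1 := by decide
  exact this p
lemma kfun_inj : ∀ p q, kfun p = kfun q → p = q := by decide
lemma kfun_surj : ∀ σ : Perm (Fin 4), σ ∈ pi43.ker → ∃ p, kfun p = σ := by
  have : ∀ σ : Perm (Fin 4), pi43 σ = 1 → ∃ p, kfun p = σ := by decide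
  exact this

def kleinHom : Multiplicative (ZMod 2 × ZMod 2) →* pi43.ker where
  toFun p := ⟨kfun p, kfun_mem p⟩
  map_one' := by ext1; have : kfun 1 = 1 := by decide
                 simpa using this
  map_mul' p q := by ext1; exact kfun_mul p q

noncomputable def kleinIso : (Multiplicative (ZMod 2 × ZMod 2)) ≃* pi43.ker := by
  refine MulEquiv.ofBijective kleinHom ⟨?_, ?_⟩
  · intro p q h; exact kfun_inj p q (by simpa [kleinHom, Subtype.ext_iff] using h)
  · rintro ⟨σ, hσ⟩; obtain ⟨p, hp⟩ := kfun_surj σ hσ; exact ⟨p, Subtype.ext hp⟩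


abbrev K := (Multiplicative (Fin 3 → ZMod 2)) ⋊[permAction pi43] Equiv.Perm (Fin 4)

instance : DecidableEq (Multiplicative (Fin 3 → ZMod 2)) :=
  fun x y => decidable_of_iff (Multiplicative.toAdd x = Multiplicative.toAdd y)
    (by exact ⟨fun h => h, fun h => h⟩)

instance : DecidableEq K :=
  fun x y => decidable_of_iff _ (SemidirectProduct.ext_iff).symm

def σa : Perm (Fin 4) := Equiv.swap 0 3 * Equiv.swap 1 2
def σb : Perm (Fin 4) := Equiv.swap 2 3
def σc : Perm (Fin 4) := Equiv.swap 1 2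
def σd : Perm (Fin 4) := Equiv.swap 0 1 * Equiv.swap 2 3

def fa : K := ⟨Multiplicative.ofAdd (Pi.single 2 1), σa⟩
def fb : K := ⟨1, σb⟩
def fc : K := ⟨1, σc⟩
def fd : K := ⟨1, σd⟩

open SemidirectProduct in
lemma all_mem (R : Subgroup K) (hfa : fa ∈ R) (hfb : fb ∈ R) (hfc : fc ∈ R)
    (hfd : fd ∈ R) : ∀ k : K, k ∈ R := by
  have sw01 : Equiv.swap (0:Fin 4) 1 = σd * σb := by decide
  have sw23 : Equiv.swap (2:Fin 4) 3 = σb := by decide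
  have sw12 : Equiv.swap (1:Fin 4) 2 = σc := by decide
  have sw02 : Equiv.swap (0:Fin 4) 2 = σc * (σd * (σb * σc)) := by decide
  have sw13 : Equiv.swap (1:Fin 4) 3 = σb * (σc * σb) := by decide
  have sw03 : Equiv.swap (0:Fin 4) 3 = σb * (σc * (σd * (σb * (σc * σb)))) := by decide
  have hb : (inr σb : K) ∈ R := hfb
  have hc : (inr σc : K) ∈ R := hfc
  have hd : (inr σd : K) ∈ R := hfd
  have hswap : ∀ x y : Fin 4, x ≠ y → (inr (Equiv.swap x y) : K) ∈ R := by
    have h01 : (inr (Equiv.swap (0:Fin 4) 1) : K) ∈ R := by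
      rw [sw01, map_mul]; exact R.mul_mem hd hb
    have h23 : (inr (Equiv.swap (2:Fin 4) 3) : K) ∈ R := by rw [sw23]; exact hb
    have h12 : (inr (Equiv.swap (1:Fin 4) 2) : K) ∈ R := by rw [sw12]; exact hc
    have h02 : (inr (Equiv.swap (0:Fin 4) 2) : K) ∈ R := by
      rw [sw02, map_mul, map_mul, map_mul]
      exact R.mul_mem hc (R.mul_mem hd (R.mul_mem hb hc))
    have h13 : (inr (Equiv.swap (1:Fin 4) 3) : K) ∈ R := by
      rw [sw13, map_mul, map_mul]; exact R.mul_mem hb (R.mul_mem hc hb)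
    have h03 : (inr (Equiv.swap (0:Fin 4) 3) : K) ∈ R := by
      rw [sw03, map_mul, map_mul, map_mul, map_mul, map_mul]
      exact R.mul_mem hb (R.mul_mem hc (R.mul_mem hd (R.mul_mem hb (R.mul_mem hc hb))))
    intro x y hxy
    fin_cases x <;> fin_cases y <;>
      first
        | exact absurd rfl hxy
        | assumption
        | (rw [Equiv.swap_comm]; assumption)
  have hinr : ∀ σ : Perm (Fin 4), (inr σ : K) ∈ R := by
    intro σ
    refine Equiv.Perm.swap_induction_on σ ?_ ?_
    · rw [map_one]; exact R.one_mem
    · intro f x y hxy ih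
      rw [map_mul]
      exact R.mul_mem (hswap x y hxy) ih
  have h2 : (inl (Multiplicative.ofAdd (Pi.single (2:Fin 3) 1)) : K) ∈ R := by
    have e : (inl (Multiplicative.ofAdd (Pi.single (2:Fin 3) 1)) : K) = fa * (inr σa)⁻¹ := by
      have h := mk_eq_inl_mul_inr (φ := permAction pi43) σa
        (Multiplicative.ofAdd (Pi.single 2 1))
      rw [show fa = (⟨Multiplicative.ofAdd (Pi.single 2 1), σa⟩ : K) from rfl, h]
      group
    rw [e]
    exact R.mul_mem hfa (R.inv_mem (hinr σa))
  have h1 : (inl (Multiplicative.ofAdd (Pi.single (1:Fin 3) 1)) : K) ∈ R := by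
    have e : ((permAction pi43) σb) (Multiplicative.ofAdd (Pi.single (2:Fin 3) 1)) =
        Multiplicative.ofAdd (Pi.single (1:Fin 3) 1) := by decide
    have h := inl_aut (φ := permAction pi43) σb (Multiplicative.ofAdd (Pi.single (2:Fin 3) 1))
    rw [e] at h
    rw [h]
    exact R.mul_mem (R.mul_mem (hinr σb) h2) (hinr σb⁻¹)
  have h0 : (inl (Multiplicative.ofAdd (Pi.single (0:Fin 3) 1)) : K) ∈ R := by
    have e : ((permAction pi43) (σc * σb)) (Multiplicative.ofAdd (Pi.single (2:Fin 3) 1)) =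
        Multiplicative.ofAdd (Pi.single (0:Fin 3) 1) := by decide
    have h := inl_aut (φ := permAction pi43) (σc * σb)
      (Multiplicative.ofAdd (Pi.single (2:Fin 3) 1))
    rw [e] at h
    rw [h]
    exact R.mul_mem (R.mul_mem (hinr _) h2) (hinr _)
  have hinl : ∀ v : Multiplicative (Fin 3 → ZMod 2), (inl v : K) ∈ R := by
    have key : ∀ v : Multiplicative (Fin 3 → ZMod 2),
        v = (Multiplicative.ofAdd (Pi.single (0:Fin 3) 1)) ^ ((Multiplicative.toAdd v) 0).val *
            (Multiplicative.ofAdd (Pi.single (1:Fin 3) 1)) ^ ((Multiplicative.toAdd v) 1).val *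
            (Multiplicative.ofAdd (Pi.single (2:Fin 3) 1)) ^ ((Multiplicative.toAdd v) 2).val := by
      decide
    intro v
    rw [key v, map_mul, map_mul, map_pow, map_pow, map_pow]
    exact R.mul_mem (R.mul_mem (R.pow_mem h0 _) (R.pow_mem h1 _)) (R.pow_mem h2 _)
  rintro ⟨v, σ⟩
  rw [mk_eq_inl_mul_inr]
  exact R.mul_mem (hinl v) (hinr σ)
def eK : K ≃ (Multiplicative (Fin 3 → ZMod 2)) × Perm (Fin 4) :=
  ⟨fun k => (k.left, k.right), fun p => ⟨p.1, p.2⟩, fun _ => rfl, fun _ => rfl⟩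

lemma cardK : Nat.card K = 192 := by
  rw [Nat.card_congr eK, Nat.card_prod, Nat.card_eq_fintype_card, Nat.card_eq_fintype_card]
  rw [show Fintype.card (Multiplicative (Fin 3 → ZMod 2)) = 8 from by decide]
  rw [show Fintype.card (Perm (Fin 4)) = 24 from by decide]


def fgen : Fin 4 → K := ![fa, fb, fc, fd]

example : (fa * fb)^4 = 1 := by decide

lemma relK : ∀ r ∈ rels, (FreeGroup.lift fgen) r = 1 := by
  intro r hr
  simp only [rels, Set.mem_insert_iff, Set.mem_singleton_iff] at hr
  rcases hr with h|h|h|h|h|h|h|h|h|h|h <;> subst h <;>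
    simp only [a, b, c, d, map_pow, map_mul, FreeGroup.lift_apply_of] <;> decide

def φ : G →* K := PresentedGroup.toGroup relK


lemma hfaR : fa ∈ φ.range := ⟨ga, by simp [φ, fgen, ga]⟩
lemma hfbR : fb ∈ φ.range := ⟨gb, by simp [φ, fgen, gb]⟩
lemma hfcR : fc ∈ φ.range := ⟨gc, by simp [φ, fgen, gc]⟩
lemma hfdR : fd ∈ φ.range := ⟨gd, by simp [φ, fgen, gd]⟩

lemma phi_surj : Function.Surjective φ := by
  intro k
  exact all_mem φ.range hfaR hfbR hfcR hfdR k

lemma cardG : Nat.card G = 192 := by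
  have hfin : Finite G := boundG.1
  have h2 : (192:ℕ) ≤ Nat.card G := by
    rw [← cardK]
    exact Nat.card_le_card_of_surjective φ phi_surj
  have h1 := boundG.2
  omega

noncomputable def isoGK : G ≃* K := by
  have hfin : Finite G := boundG.1
  exact MulEquiv.ofBijective φ
    ((Nat.bijective_iff_surjective_and_card φ).2 ⟨phi_surj, by rw [cardG, cardK]⟩)

/-- The group presented on `a, b, c, d` with relators `a², b², c², d², (ab)⁴, (bc)³,
`(cd)⁴, (ac)², (ad)², (bd)²` and `(bcd)³` has order 192, and there is a surjection
`π : S₄ → S₃` with kernel the Klein four-group such that the group is isomorphic to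
`(Fin 3 → ZMod 2) ⋊ S₄`, `S₄` acting by permuting coordinates through `π`. -/
theorem statement_9 :
    Nat.card G = 192 ∧
    ∃ π : Equiv.Perm (Fin 4) →* Equiv.Perm (Fin 3),
      Function.Surjective π ∧
      Nonempty (π.ker ≃* Multiplicative (ZMod 2 × ZMod 2)) ∧
      Nonempty (G ≃*
        (Multiplicative (Fin 3 → ZMod 2)) ⋊[permAction π] Equiv.Perm (Fin 4)) := by
  exact ⟨cardG, pi43, pi43_surj, ⟨kleinIso.symm⟩, ⟨isoGK⟩⟩

end Stmt9
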